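/- For all τ₁, B, B̄, L₀, r > 0 there exist constants c, C > 0 depending only on (τ₁, B, B̄, L₀, r) with the following property. Let L : ℝ^p → ℝ be twice continuously differentiable such that: ∇²L(θ) is positive semidefinite for every θ ∈ ℝ^p; ‖∇L(θ)‖₂ ≤ B and ‖∇²L(θ)‖₂ ≤ B̄ for all θ; the Hessian is L₀-Lipschitz in spectral norm (‖∇²L(θ₁) − ∇²L(θ₂)‖₂ ≤ L₀‖θ₁ − θ₂‖₂ for all θ₁, θ₂); θ̂ is a point with ∇L(θ̂) = 0; L(θ₁) − L(θ₂) ≥ ⟨∇L(θ₂), θ₁ − θ₂⟩ + τ₁‖θ₁ − θ₂‖₂² for all θ₁, θ₂ in the closed ball of radius r around θ̂; and the initial point satisfies ‖∇L(θ^{(0)})‖₂ ≤ min{τ₁ r, τ₁²/L₀}. Let (θ^{(k)}) be noisy Newton iterates with ‖N_k‖₂ ≤ ε for all k, where 0 ≤ ε ≤ c. Then for every K ≥ 1: ‖θ^{(K)} − θ̂‖₂ ≤ C(2^{−2^K} + ε). -/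

import Mathlib

open scoped RealInnerProductSpace

private lemma newton_taylor {p : ℕ} {L : EuclideanSpace ℝ (Fin p) → ℝ}
    {H : EuclideanSpace ℝ (Fin p) → EuclideanSpace ℝ (Fin p) →L[ℝ] EuclideanSpace ℝ (Fin p)}
    {L₀ : ℝ} (hL₀ : 0 < L₀) (hH : ∀ x, HasFDerivAt (gradient L) (H x) x)
    (hLip : ∀ θ₁ θ₂, ‖H θ₁ - H θ₂‖ ≤ L₀ * ‖θ₁ - θ₂‖)
    (x y : EuclideanSpace ℝ (Fin p)) :
    ‖gradient L y - gradient L x - H x (y - x)‖ ≤ L₀ * ‖y - x‖ ^ 2 := by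
  have hdist : ∀ z ∈ segment ℝ x y, ‖z - x‖ ≤ ‖y - x‖ := by
    intro z hz
    obtain ⟨a, b, ha, hb, hab, rfl⟩ := hz
    have ha' : a = 1 - b := by linarith
    have hz' : a • x + b • y - x = b • (y - x) := by rw [ha']; module
    rw [hz', norm_smul, Real.norm_eq_abs, abs_of_nonneg hb]
    nlinarith [norm_nonneg (y - x)]
  have key := Convex.norm_image_sub_le_of_norm_hasFDerivWithin_le
    (f := fun z => gradient L z - H x z) (f' := fun z => H z - H x)
    (s := segment ℝ x y) (C := L₀ * ‖y - x‖)
    (fun z _ => ((hH z).sub ((H x).hasFDerivAt)).hasFDerivWithinAt)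
    (fun z hz => (hLip z x).trans (by nlinarith [hdist z hz, norm_nonneg (z - x)]))
    (convex_segment x y)
    (left_mem_segment ℝ x y) (right_mem_segment ℝ x y)
  have : gradient L y - H x y - (gradient L x - H x x) = gradient L y - gradient L x - H x (y - x) := by
    rw [map_sub]; abel
  rw [this] at key
  nlinarith [norm_nonneg (y - x), key]

private lemma newton_mono {p : ℕ} {L : EuclideanSpace ℝ (Fin p) → ℝ}
    {H : EuclideanSpace ℝ (Fin p) → EuclideanSpace ℝ (Fin p) →L[ℝ] EuclideanSpace ℝ (Fin p)}
    (hH : ∀ x, HasFDerivAt (gradient L) (H x) x)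
    (hPSD : ∀ x u, (0:ℝ) ≤ ⟪u, H x u⟫)
    (x y : EuclideanSpace ℝ (Fin p)) :
    0 ≤ ⟪gradient L x - gradient L y, x - y⟫ := by
  set v := x - y with hv
  have hline : ∀ t : ℝ, HasDerivAt (fun t : ℝ => y + t • v) v t := fun t => by
    simpa using ((hasDerivAt_id t).smul_const v).const_add y
  have hf : ∀ t : ℝ, HasDerivAt (fun t : ℝ => (innerSL ℝ v) (gradient L (y + t • v)))
      ((innerSL ℝ v) (H (y + t • v) v)) t := by
    intro t
    have h1 : HasDerivAt (fun t : ℝ => gradient L (y + t • v)) (H (y + t • v) v) t :=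
      (hH (y + t • v)).comp_hasDerivAt (f := fun t : ℝ => y + t • v) t (hline t)
    exact (innerSL ℝ v).hasFDerivAt.comp_hasDerivAt t h1
  have hmono : Monotone (fun t : ℝ => (innerSL ℝ v) (gradient L (y + t • v))) := by
    apply monotone_of_deriv_nonneg (fun t => (hf t).differentiableAt)
    intro t
    rw [(hf t).deriv]
    simpa using hPSD (y + t • v) v
  have h01 := hmono (zero_le_one)
  simp only [innerSL_apply_apply, zero_smul, add_zero, one_smul] at h01
  have hyx : y + v = x := by rw [hv]; abel
  rw [hyx] at h01
  have : ⟪gradient L x - gradient L y, v⟫ = ⟪v, gradient L x⟫ - ⟪v, gradient L y⟫ := by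
    rw [inner_sub_left, real_inner_comm (gradient L x) v, real_inner_comm (gradient L y) v]
  rw [this]
  linarith

private lemma newton_coercive {p : ℕ} {L : EuclideanSpace ℝ (Fin p) → ℝ}
    {H : EuclideanSpace ℝ (Fin p) → EuclideanSpace ℝ (Fin p) →L[ℝ] EuclideanSpace ℝ (Fin p)}
    {L₀ τ₁ r : ℝ} (hL₀ : 0 < L₀)
    (hH : ∀ x, HasFDerivAt (gradient L) (H x) x)
    (hLip : ∀ θ₁ θ₂, ‖H θ₁ - H θ₂‖ ≤ L₀ * ‖θ₁ - θ₂‖)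
    (θhat : EuclideanSpace ℝ (Fin p))
    (hSC : ∀ θ₁ θ₂ : EuclideanSpace ℝ (Fin p), ‖θ₁ - θhat‖ ≤ r → ‖θ₂ - θhat‖ ≤ r →
      L θ₁ - L θ₂ ≥ ⟪gradient L θ₂, θ₁ - θ₂⟫ + τ₁ * ‖θ₁ - θ₂‖ ^ 2)
    (x : EuclideanSpace ℝ (Fin p)) (hx : ‖x - θhat‖ < r)
    (u : EuclideanSpace ℝ (Fin p)) :
    2 * τ₁ * ‖u‖ ^ 2 ≤ ⟪u, H x u⟫ := by
  rcases eq_or_ne u 0 with rfl | hu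
  · simp
  have hu0 : 0 < ‖u‖ := norm_pos_iff.mpr hu
  have key : ∀ t : ℝ, 0 < t → t ≤ (r - ‖x - θhat‖) / ‖u‖ →
      2 * τ₁ * ‖u‖ ^ 2 ≤ ⟪u, H x u⟫ + L₀ * t * ‖u‖ ^ 3 := by
    intro t ht ht0
    have hxt : ‖x + t • u - θhat‖ ≤ r := by
      have h1 : x + t • u - θhat = (x - θhat) + t • u := by abel
      rw [h1]
      have := norm_add_le (x - θhat) (t • u)
      rw [norm_smul, Real.norm_eq_abs, abs_of_pos ht] at this
      have h2 : t * ‖u‖ ≤ r - ‖x - θhat‖ := by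
        calc t * ‖u‖ ≤ (r - ‖x - θhat‖) / ‖u‖ * ‖u‖ :=
              mul_le_mul_of_nonneg_right ht0 (le_of_lt hu0)
          _ = r - ‖x - θhat‖ := by field_simp
      linarith
    have hsc1 := hSC (x + t • u) x hxt (le_of_lt hx)
    have hsc2 := hSC x (x + t • u) (le_of_lt hx) hxt
    have e1 : x + t • u - x = t • u := by abel
    have e2 : x - (x + t • u) = -(t • u) := by abel
    rw [e1] at hsc1
    rw [e2] at hsc2
    rw [inner_neg_right, norm_neg] at hsc2
    have hsum : ⟪gradient L (x + t • u) - gradient L x, t • u⟫ ≥ 2 * τ₁ * ‖t • u‖ ^ 2 := by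
      rw [inner_sub_left]; linarith
    have htu : ‖t • u‖ = t * ‖u‖ := by
      rw [norm_smul, Real.norm_eq_abs, abs_of_pos ht]
    have htay := newton_taylor hL₀ hH hLip x (x + t • u)
    rw [e1] at htay
    set err := gradient L (x + t • u) - gradient L x - H x (t • u) with herr
    have hdecomp : gradient L (x + t • u) - gradient L x = H x (t • u) + err := by
      rw [herr]; abel
    rw [hdecomp, inner_add_left] at hsum
    have hcs : ⟪err, t • u⟫ ≤ L₀ * (t * ‖u‖) ^ 2 * (t * ‖u‖) := by
      calc ⟪err, t • u⟫ ≤ ‖err‖ * ‖t • u‖ := real_inner_le_norm _ _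
        _ ≤ L₀ * (t * ‖u‖) ^ 2 * (t * ‖u‖) := by
            rw [htu] at htay ⊢
            exact mul_le_mul_of_nonneg_right htay (by positivity)
    have hsmul : ⟪(H x) (t • u), t • u⟫ = t ^ 2 * ⟪H x u, u⟫ := by
      rw [map_smul, real_inner_smul_left, real_inner_smul_right]
      ring
    rw [hsmul, htu] at hsum
    have hcomm : ⟪H x u, u⟫ = ⟪u, H x u⟫ := real_inner_comm _ _
    rw [hcomm] at hsum
    have hdiv : t ^ 2 * (2 * τ₁ * ‖u‖ ^ 2) ≤ t ^ 2 * (⟪u, H x u⟫ + L₀ * t * ‖u‖ ^ 3) := by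
      nlinarith [hsum, hcs]
    exact (mul_le_mul_iff_right₀ (by positivity : (0:ℝ) < t ^ 2)).mp hdiv
  by_contra hcon
  push_neg at hcon
  set δ := 2 * τ₁ * ‖u‖ ^ 2 - ⟪u, H x u⟫ with hδ
  have hδ0 : 0 < δ := by linarith
  set t := min ((r - ‖x - θhat‖) / ‖u‖) (δ / (2 * L₀ * ‖u‖ ^ 3)) with htdef
  have ht0 : 0 < t := lt_min (div_pos (by linarith) hu0) (div_pos hδ0 (by positivity))
  have := key t ht0 (min_le_left _ _)
  have h2 : L₀ * t * ‖u‖ ^ 3 ≤ δ / 2 := by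
    have := min_le_right ((r - ‖x - θhat‖) / ‖u‖) (δ / (2 * L₀ * ‖u‖ ^ 3))
    rw [← htdef] at this
    calc L₀ * t * ‖u‖ ^ 3 ≤ L₀ * (δ / (2 * L₀ * ‖u‖ ^ 3)) * ‖u‖ ^ 3 := by
          have h3 : (0:ℝ) ≤ L₀ * ‖u‖ ^ 3 := by positivity
          nlinarith [this]
      _ = δ / 2 := by field_simp
  linarith

private lemma newton_dist {p : ℕ} {L : EuclideanSpace ℝ (Fin p) → ℝ}
    {τ₁ r : ℝ} (hτ₁ : 0 < τ₁) (hr : 0 < r)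
    (hmono : ∀ x y : EuclideanSpace ℝ (Fin p), 0 ≤ ⟪gradient L x - gradient L y, x - y⟫)
    (θhat : EuclideanSpace ℝ (Fin p)) (hg0 : gradient L θhat = 0)
    (hSC : ∀ θ₁ θ₂ : EuclideanSpace ℝ (Fin p), ‖θ₁ - θhat‖ ≤ r → ‖θ₂ - θhat‖ ≤ r →
      L θ₁ - L θ₂ ≥ ⟪gradient L θ₂, θ₁ - θ₂⟫ + τ₁ * ‖θ₁ - θ₂‖ ^ 2)
    (x : EuclideanSpace ℝ (Fin p)) (hx : ‖gradient L x‖ < 2 * τ₁ * r) :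
    2 * τ₁ * ‖x - θhat‖ ≤ ‖gradient L x‖ := by
  have hself : ‖θhat - θhat‖ ≤ r := by simp [le_of_lt hr]
  have hkey : ∀ z : EuclideanSpace ℝ (Fin p), ‖z - θhat‖ ≤ r →
      2 * τ₁ * ‖z - θhat‖ ^ 2 ≤ ⟪gradient L z, z - θhat⟫ := by
    intro z hz
    have h1 := hSC z θhat hz hself
    have h2 := hSC θhat z hself hz
    rw [hg0] at h1
    simp only [inner_zero_left] at h1
    have e2 : θhat - z = -(z - θhat) := by abel
    rw [e2, inner_neg_right, norm_neg] at h2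
    linarith
  by_cases hs : ‖x - θhat‖ ≤ r
  · have hk := hkey x hs
    have hcs : ⟪gradient L x, x - θhat⟫ ≤ ‖gradient L x‖ * ‖x - θhat‖ := real_inner_le_norm _ _
    rcases eq_or_lt_of_le (norm_nonneg (x - θhat)) with h0 | h0
    · rw [← h0]; simp [norm_nonneg]
    · nlinarith
  · exfalso
    push_neg at hs
    set s := ‖x - θhat‖ with hsdef
    have hs0 : 0 < s := lt_trans hr hs
    set z := θhat + (r / s) • (x - θhat) with hzdef
    have hz1 : z - θhat = (r / s) • (x - θhat) := by rw [hzdef]; abel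
    have hzn : ‖z - θhat‖ = r := by
      rw [hz1, norm_smul, Real.norm_eq_abs, abs_of_pos (by positivity), ← hsdef]
      field_simp
    have hk := hkey z (le_of_eq hzn)
    rw [hzn] at hk
    have hm := hmono x z
    have hxz : x - z = (1 - r / s) • (x - θhat) := by
      rw [hzdef]
      rw [sub_smul, one_smul]
      abel
    have hrs : 0 < 1 - r / s := by
      rw [sub_pos, div_lt_one hs0]
      exact hs
    rw [hxz, real_inner_smul_right, inner_sub_left] at hm
    have hm2 : ⟪gradient L z, x - θhat⟫ ≤ ⟪gradient L x, x - θhat⟫ := by nlinarith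
    have hze : ⟪gradient L z, z - θhat⟫ = (r / s) * ⟪gradient L z, x - θhat⟫ := by
      rw [hz1, real_inner_smul_right]
    have hcs : ⟪gradient L x, x - θhat⟫ ≤ ‖gradient L x‖ * s := by
      rw [hsdef]; exact real_inner_le_norm _ _
    have h5 : 2 * τ₁ * r ^ 2 ≤ (r / s) * (‖gradient L x‖ * s) := by
      rw [hze] at hk
      have hrs0 : 0 < r / s := by positivity
      nlinarith
    have h6 : (r / s) * (‖gradient L x‖ * s) = ‖gradient L x‖ * r := by
      field_simp
    rw [h6] at h5
    nlinarith

private lemma newton_inverse {p : ℕ}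
    {H : EuclideanSpace ℝ (Fin p) →L[ℝ] EuclideanSpace ℝ (Fin p)}
    {τ₁ : ℝ} (hτ₁ : 0 < τ₁)
    (hco : ∀ u, 2 * τ₁ * ‖u‖ ^ 2 ≤ ⟪u, H u⟫) (v : EuclideanSpace ℝ (Fin p)) :
    H (Ring.inverse H v) = v ∧ 2 * τ₁ * ‖Ring.inverse H v‖ ≤ ‖v‖ := by
  have hinj : Function.Injective H := by
    intro a b hab
    have h1 : H (a - b) = 0 := by rw [map_sub, hab, sub_self]
    have h2 := hco (a - b)
    rw [h1, inner_zero_right] at h2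
    have h3 : ‖a - b‖ ^ 2 ≤ 0 := by
      by_contra hpos
      push_neg at hpos
      nlinarith [h2]
    have h4 : ‖a - b‖ = 0 := by nlinarith [sq_nonneg ‖a - b‖, norm_nonneg (a - b)]
    rwa [norm_eq_zero, sub_eq_zero] at h4
  have hsurj : Function.Surjective H.toLinearMap :=
    LinearMap.injective_iff_surjective.mp hinj
  let e : EuclideanSpace ℝ (Fin p) ≃ₗ[ℝ] EuclideanSpace ℝ (Fin p) :=
    LinearEquiv.ofBijective H.toLinearMap ⟨hinj, hsurj⟩
  let e' := e.toContinuousLinearEquiv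
  have he : ∀ w, e' w = H w := fun w => rfl
  let u : Units (EuclideanSpace ℝ (Fin p) →L[ℝ] EuclideanSpace ℝ (Fin p)) :=
    ⟨H, (e'.symm : EuclideanSpace ℝ (Fin p) →L[ℝ] EuclideanSpace ℝ (Fin p)),
      ContinuousLinearMap.ext fun w => by
        simp only [ContinuousLinearMap.mul_apply, ContinuousLinearMap.one_apply,
          ContinuousLinearMap.coe_coe]
        rw [← he]; exact e'.apply_symm_apply w,
      ContinuousLinearMap.ext fun w => by
        simp only [ContinuousLinearMap.mul_apply, ContinuousLinearMap.one_apply,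
          ContinuousLinearMap.coe_coe]
        rw [← he]; exact e'.symm_apply_apply w⟩
  have hru : Ring.inverse H = (↑u⁻¹ : EuclideanSpace ℝ (Fin p) →L[ℝ] EuclideanSpace ℝ (Fin p)) :=
    Ring.inverse_unit u
  set w := Ring.inverse H v with hw
  have hHw : H w = v := by
    rw [hw, hru]
    show H (e'.symm v) = v
    rw [← he]; exact e'.apply_symm_apply v
  refine ⟨hHw, ?_⟩
  have h2 := hco w
  rw [hHw] at h2
  have hcs : ⟪w, v⟫ ≤ ‖w‖ * ‖v‖ := real_inner_le_norm _ _
  rcases eq_or_lt_of_le (norm_nonneg w) with h0 | h0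
  · rw [← h0]; simp [norm_nonneg]
  · nlinarith

private lemma newton_arith1 {A g g' m₀ c : ℝ} (hA0 : 0 ≤ A) (hm0 : 0 ≤ m₀)
    (hg : 0 ≤ g) (hgm : g ≤ m₀) (hAm : A * m₀ ≤ 1 / 4) (hc : c ≤ m₀ / 2)
    (hs : g' ≤ A * g ^ 2 + c) : g' ≤ m₀ := by
  nlinarith [mul_nonneg (mul_nonneg hA0 (sub_nonneg.mpr hgm)) (add_nonneg hm0 hg),
    mul_nonneg (sub_nonneg.mpr hAm) hm0]

private lemma newton_arith2 {x y φ E : ℝ} (hφ0 : 0 ≤ φ) (hφ4 : φ ≤ 1 / 4)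
    (hE0 : 0 ≤ E) (hE18 : E ≤ 1 / 18) (hx : 0 ≤ x) (ih : x ≤ φ + 3 * E)
    (h : y ≤ x ^ 2 + E) : y ≤ 2 * φ ^ 2 + 3 * E := by
  nlinarith [mul_le_mul ih ih hx (by linarith), mul_nonneg hE0 (sub_nonneg.mpr hφ4),
    mul_nonneg hE0 (sub_nonneg.mpr hE18), sq_nonneg φ]

private lemma newton_arith4 {τ₁ d r : ℝ} (hτ : 0 < τ₁) (hr : 0 < r)
    (h : 2 * τ₁ * d ≤ τ₁ * r) : d < r := by nlinarith

private lemma newton_arith5 {τ₁ L₀ B G ε Bbar : ℝ} (hτ : 0 < τ₁) (hL : 0 < L₀)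
    (hε0 : 0 ≤ ε) (hε1 : ε ≤ 1) (hG : 0 ≤ G) (hGB : G ≤ B) :
    L₀ * (2 * τ₁ * ε + G) ^ 2 + 4 * τ₁ ^ 2 * Bbar * ε
      ≤ L₀ * G ^ 2 + (4 * τ₁ * L₀ * B + 4 * τ₁ ^ 2 * L₀ + 4 * τ₁ ^ 2 * Bbar) * ε := by
  nlinarith [mul_nonneg (mul_nonneg (mul_nonneg hτ.le hL.le) hε0) (sub_nonneg.mpr hGB),
    mul_nonneg (mul_nonneg (mul_nonneg (mul_nonneg hτ.le hτ.le) hL.le) hε0)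
      (sub_nonneg.mpr hε1)]

private lemma newton_arith6 {u v P e : ℝ} (hu : 0 ≤ u) (hv : 0 ≤ v) (hP : 0 ≤ P)
    (he : 0 ≤ e) : u * P + v * e ≤ (2 * u + v) * (P + e) := by
  nlinarith [mul_nonneg hu hP, mul_nonneg hu he, mul_nonneg hv hP]

set_option maxHeartbeats 1000000 in
theorem stmt_8 (τ₁ B Bbar L₀ r : ℝ) (hτ₁ : 0 < τ₁) (hB : 0 < B) (hBbar : 0 < Bbar)
    (hL₀ : 0 < L₀) (hr : 0 < r) :
    ∃ c C : ℝ, 0 < c ∧ 0 < C ∧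
      ∀ (p : ℕ) (L : EuclideanSpace ℝ (Fin p) → ℝ)
        (H : EuclideanSpace ℝ (Fin p) → (EuclideanSpace ℝ (Fin p) →L[ℝ] EuclideanSpace ℝ (Fin p))),
        ContDiff ℝ 2 L →
        (∀ x, HasFDerivAt (gradient L) (H x) x) →
        (∀ (x u : EuclideanSpace ℝ (Fin p)), 0 ≤ ⟪u, H x u⟫) →
        (∀ x : EuclideanSpace ℝ (Fin p), ‖gradient L x‖ ≤ B) →
        (∀ x : EuclideanSpace ℝ (Fin p), ‖H x‖ ≤ Bbar) →
        (∀ θ₁ θ₂ : EuclideanSpace ℝ (Fin p), ‖H θ₁ - H θ₂‖ ≤ L₀ * ‖θ₁ - θ₂‖) →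
        ∀ θhat : EuclideanSpace ℝ (Fin p), gradient L θhat = 0 →
        (∀ θ₁ θ₂ : EuclideanSpace ℝ (Fin p), ‖θ₁ - θhat‖ ≤ r → ‖θ₂ - θhat‖ ≤ r →
          L θ₁ - L θ₂ ≥ ⟪gradient L θ₂, θ₁ - θ₂⟫ + τ₁ * ‖θ₁ - θ₂‖ ^ 2) →
        ∀ (θ N : ℕ → EuclideanSpace ℝ (Fin p)) (ε : ℝ),
          ‖gradient L (θ 0)‖ ≤ min (τ₁ * r) (τ₁ ^ 2 / L₀) →
          (∀ k, θ (k + 1) = θ k - Ring.inverse (H (θ k)) (gradient L (θ k)) + N k) →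
          (∀ k, ‖N k‖ ≤ ε) → 0 ≤ ε → ε ≤ c →
          ∀ K : ℕ, 1 ≤ K → ‖θ K - θhat‖ ≤ C * ((1 / 2 : ℝ) ^ 2 ^ K + ε) := by
  set A := L₀ / (4 * τ₁ ^ 2) with hA
  set b := L₀ * B / τ₁ + L₀ + Bbar with hb
  set m₀ := min (τ₁ * r) (τ₁ ^ 2 / L₀) with hm₀
  have hA0 : 0 < A := by positivity
  have hb0 : 0 < b := by positivity
  have hm₀0 : 0 < m₀ := lt_min (by positivity) (by positivity)
  have hAm : A * m₀ ≤ 1 / 4 := by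
    have h1 : A * m₀ ≤ A * (τ₁ ^ 2 / L₀) :=
      mul_le_mul_of_nonneg_left (min_le_right _ _) hA0.le
    have h2 : A * (τ₁ ^ 2 / L₀) = 1 / 4 := by rw [hA]; field_simp
    linarith
  refine ⟨min 1 (min (1 / (18 * A * b)) (m₀ / (2 * b))), 2 * τ₁ / L₀ + 3 * b / (2 * τ₁),
    lt_min one_pos (lt_min (by positivity) (by positivity)), by positivity, ?_⟩
  intro p L Hf _ hH hPSD hgB hHB hLip θhat hg0 hSC θ N ε h0 hrec hN hε0 hεc K _
  have hε1 : ε ≤ 1 := le_trans hεc (min_le_left _ _)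
  have hεa : ε ≤ 1 / (18 * A * b) := le_trans hεc ((min_le_right _ _).trans (min_le_left _ _))
  have hεb : ε ≤ m₀ / (2 * b) := le_trans hεc ((min_le_right _ _).trans (min_le_right _ _))
  have hεE : A * b * ε ≤ 1 / 18 := by
    have h1 := mul_le_mul_of_nonneg_left hεa (by positivity : (0:ℝ) ≤ A * b)
    have h2 : A * b * (1 / (18 * A * b)) = 1 / 18 := by field_simp
    linarith
  have hεm : b * ε ≤ m₀ / 2 := by
    have h1 := mul_le_mul_of_nonneg_left hεb hb0.le
    have h2 : b * (m₀ / (2 * b)) = m₀ / 2 := by field_simp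
    linarith
  have hmono := newton_mono hH hPSD
  have hdistb : ∀ x, ‖gradient L x‖ < 2 * τ₁ * r → 2 * τ₁ * ‖x - θhat‖ ≤ ‖gradient L x‖ :=
    fun x hx => newton_dist hτ₁ hr hmono θhat hg0 hSC x hx
  have hco : ∀ x, ‖x - θhat‖ < r → ∀ u, 2 * τ₁ * ‖u‖ ^ 2 ≤ ⟪u, Hf x u⟫ :=
    fun x hx u => newton_coercive hL₀ hH hLip θhat hSC x hx u
  -- one-step estimate
  have hstep : ∀ k, ‖gradient L (θ k)‖ ≤ m₀ →
      ‖gradient L (θ (k + 1))‖ ≤ A * ‖gradient L (θ k)‖ ^ 2 + b * ε := by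
    intro k hk
    have hkr : ‖gradient L (θ k)‖ ≤ τ₁ * r := hk.trans (min_le_left _ _)
    have hgr : ‖gradient L (θ k)‖ < 2 * τ₁ * r :=
      lt_of_le_of_lt hkr (by nlinarith)
    have hdb := hdistb (θ k) hgr
    have hin : ‖θ k - θhat‖ < r := newton_arith4 hτ₁ hr (hdb.trans hkr)
    obtain ⟨hHw, hwb⟩ := newton_inverse hτ₁ (hco (θ k) hin) (gradient L (θ k))
    have hθ' : θ (k + 1) - θ k = N k - Ring.inverse (Hf (θ k)) (gradient L (θ k)) := by
      rw [hrec k]; abel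
    have htay := newton_taylor hL₀ hH hLip (θ k) (θ (k + 1))
    have hdecomp : gradient L (θ (k + 1)) =
        (gradient L (θ (k + 1)) - gradient L (θ k) - Hf (θ k) (θ (k + 1) - θ k))
          + Hf (θ k) (N k) := by
      rw [hθ', map_sub, hHw]; abel
    have hnorm1 : ‖gradient L (θ (k + 1))‖ ≤ L₀ * ‖θ (k + 1) - θ k‖ ^ 2 + Bbar * ε := by
      rw [hdecomp]
      refine (norm_add_le _ _).trans ?_
      have h2 : ‖Hf (θ k) (N k)‖ ≤ Bbar * ε :=
        le_trans ((Hf (θ k)).le_opNorm (N k))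
          (mul_le_mul (hHB (θ k)) (hN k) (norm_nonneg _) hBbar.le)
      linarith
    have hwle : ‖Ring.inverse (Hf (θ k)) (gradient L (θ k))‖ ≤ ‖gradient L (θ k)‖ / (2 * τ₁) := by
      rw [le_div_iff₀ (by positivity : (0:ℝ) < 2 * τ₁)]
      linarith [hwb]
    have hd : ‖θ (k + 1) - θ k‖ ≤ ε + ‖gradient L (θ k)‖ / (2 * τ₁) := by
      rw [hθ']
      refine (norm_sub_le _ _).trans ?_
      linarith [hN k]
    have hd0 : 0 ≤ ε + ‖gradient L (θ k)‖ / (2 * τ₁) := by positivity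
    have hmid : ‖gradient L (θ (k + 1))‖ ≤
        L₀ * (ε + ‖gradient L (θ k)‖ / (2 * τ₁)) ^ 2 + Bbar * ε := by
      have hsq : ‖θ (k + 1) - θ k‖ ^ 2 ≤ (ε + ‖gradient L (θ k)‖ / (2 * τ₁)) ^ 2 :=
        pow_le_pow_left₀ (norm_nonneg _) hd 2
      have := mul_le_mul_of_nonneg_left hsq hL₀.le
      linarith
    refine hmid.trans ?_
    have hgB' := hgB (θ k)
    have hla : 4 * τ₁ ^ 2 * (L₀ * (ε + ‖gradient L (θ k)‖ / (2 * τ₁)) ^ 2 + Bbar * ε)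
        = L₀ * (2 * τ₁ * ε + ‖gradient L (θ k)‖) ^ 2 + 4 * τ₁ ^ 2 * Bbar * ε := by
      field_simp
      ring
    have hra : 4 * τ₁ ^ 2 * (A * ‖gradient L (θ k)‖ ^ 2 + b * ε)
        = L₀ * ‖gradient L (θ k)‖ ^ 2
          + (4 * τ₁ * L₀ * B + 4 * τ₁ ^ 2 * L₀ + 4 * τ₁ ^ 2 * Bbar) * ε := by
      rw [hA, hb]
      field_simp
    have hkey : 4 * τ₁ ^ 2 * (L₀ * (ε + ‖gradient L (θ k)‖ / (2 * τ₁)) ^ 2 + Bbar * ε)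
        ≤ 4 * τ₁ ^ 2 * (A * ‖gradient L (θ k)‖ ^ 2 + b * ε) := by
      rw [hla, hra]
      exact newton_arith5 hτ₁ hL₀ hε0 hε1 (norm_nonneg _) hgB'
    exact (mul_le_mul_iff_right₀ (by positivity : (0:ℝ) < 4 * τ₁ ^ 2)).mp hkey
  -- main induction
  have hmain : ∀ k, ‖gradient L (θ k)‖ ≤ m₀ ∧
      A * ‖gradient L (θ k)‖ ≤ (1 / 2 : ℝ) ^ (2 ^ k + 1) + 3 * (A * b * ε) := by
    intro k
    induction k with
    | zero =>
      refine ⟨h0, ?_⟩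
      have h1 : A * ‖gradient L (θ 0)‖ ≤ A * m₀ := mul_le_mul_of_nonneg_left h0 hA0.le
      have h2 : (1 / 2 : ℝ) ^ (2 ^ 0 + 1) = 1 / 4 := by norm_num
      rw [h2]
      refine h1.trans (hAm.trans (le_add_of_nonneg_right ?_))
      have : (0:ℝ) ≤ A * b * ε := mul_nonneg (mul_nonneg hA0.le hb0.le) hε0
      linarith
    | succ k ih =>
      obtain ⟨ih1, ih2⟩ := ih
      have hs := hstep k ih1
      have hg0' : (0:ℝ) ≤ ‖gradient L (θ k)‖ := norm_nonneg _
      constructor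
      · exact newton_arith1 hA0.le hm₀0.le hg0' ih1 hAm hεm hs
      · have h1 : A * ‖gradient L (θ (k + 1))‖ ≤ (A * ‖gradient L (θ k)‖) ^ 2 + A * b * ε := by
          calc A * ‖gradient L (θ (k + 1))‖
              ≤ A * (A * ‖gradient L (θ k)‖ ^ 2 + b * ε) :=
                mul_le_mul_of_nonneg_left hs hA0.le
            _ = (A * ‖gradient L (θ k)‖) ^ 2 + A * b * ε := by ring
        have hφ0 : (0:ℝ) ≤ (1 / 2 : ℝ) ^ (2 ^ k + 1) := by positivity
        have hφ4 : (1 / 2 : ℝ) ^ (2 ^ k + 1) ≤ 1 / 4 := by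
          calc (1 / 2 : ℝ) ^ (2 ^ k + 1) ≤ (1 / 2 : ℝ) ^ 2 := by
                apply pow_le_pow_of_le_one (by norm_num) (by norm_num)
                have := Nat.one_le_two_pow (n := k)
                omega
            _ = 1 / 4 := by norm_num
        have hφsq : 2 * ((1 / 2 : ℝ) ^ (2 ^ k + 1)) ^ 2 = (1 / 2 : ℝ) ^ (2 ^ (k + 1) + 1) := by
          rw [← pow_mul]
          have he : (2 ^ k + 1) * 2 = 2 ^ (k + 1) + 2 := by rw [pow_succ]; ring
          rw [he, pow_succ]
          ring
        have hAg : (0:ℝ) ≤ A * ‖gradient L (θ k)‖ := by positivity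
        have hE0 : (0:ℝ) ≤ A * b * ε := by positivity
        rw [← hφsq]
        exact newton_arith2 hφ0 hφ4 hE0 hεE hAg ih2 h1
  -- conclusion
  obtain ⟨hm1, hm2⟩ := hmain K
  have hgr : ‖gradient L (θ K)‖ < 2 * τ₁ * r :=
    lt_of_le_of_lt (hm1.trans (min_le_left _ _)) (by nlinarith)
  have hdb := hdistb (θ K) hgr
  have hP0 : (0:ℝ) ≤ (1 / 2 : ℝ) ^ 2 ^ K := by positivity
  have hPe : (1 / 2 : ℝ) ^ (2 ^ K + 1) = (1 / 2 : ℝ) ^ 2 ^ K * (1 / 2) := pow_succ _ _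
  have h3 : 2 * τ₁ * A * ‖θ K - θhat‖ ≤ (1 / 2 : ℝ) ^ 2 ^ K * (1 / 2) + 3 * (A * b * ε) := by
    have h4 : A * (2 * τ₁ * ‖θ K - θhat‖) ≤ A * ‖gradient L (θ K)‖ :=
      mul_le_mul_of_nonneg_left hdb hA0.le
    rw [hPe] at hm2
    linarith [h4, hm2]
  have h6 : 4 * τ₁ ^ 2 / L₀ * (2 * τ₁ * A * ‖θ K - θhat‖) = 2 * τ₁ * ‖θ K - θhat‖ := by
    rw [hA]; field_simp
  have h7 : 4 * τ₁ ^ 2 / L₀ * ((1 / 2 : ℝ) ^ 2 ^ K * (1 / 2) + 3 * (A * b * ε))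
      = 2 * τ₁ ^ 2 / L₀ * (1 / 2 : ℝ) ^ 2 ^ K + 3 * b * ε := by
    rw [hA]; field_simp; ring
  have h8 : 2 * τ₁ * ‖θ K - θhat‖
      ≤ 2 * τ₁ ^ 2 / L₀ * (1 / 2 : ℝ) ^ 2 ^ K + 3 * b * ε := by
    rw [← h6, ← h7]
    exact mul_le_mul_of_nonneg_left h3 (by positivity)
  have h10 : 2 * τ₁ * (τ₁ / L₀ * (1 / 2 : ℝ) ^ 2 ^ K + 3 * b / (2 * τ₁) * ε)
      = 2 * τ₁ ^ 2 / L₀ * (1 / 2 : ℝ) ^ 2 ^ K + 3 * b * ε := by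
    field_simp
  have h9 : ‖θ K - θhat‖ ≤ τ₁ / L₀ * (1 / 2 : ℝ) ^ 2 ^ K + 3 * b / (2 * τ₁) * ε :=
    (mul_le_mul_iff_right₀ (by positivity : (0:ℝ) < 2 * τ₁)).mp (by rw [h10]; exact h8)
  refine h9.trans ?_
  have h11 := newton_arith6 (u := τ₁ / L₀) (v := 3 * b / (2 * τ₁))
    (by positivity) (by positivity) hP0 hε0
  have h12 : (2 * (τ₁ / L₀) + 3 * b / (2 * τ₁)) * ((1 / 2 : ℝ) ^ 2 ^ K + ε)
      = (2 * τ₁ / L₀ + 3 * b / (2 * τ₁)) * ((1 / 2 : ℝ) ^ 2 ^ K + ε) := by ring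
  exact h12 ▸ h11
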